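/- The sequence m ↦ g_m(√(m-1)) = (2^{(2-m)/2}/Γ(m/2))·(m-1)^{(m-1)/2}·e^{-(m-1)/2} is monotone decreasing in m and converges to 1/√π as m → ∞. -/

import Mathlib

open Real Filter Stirling Topology Nat

set_option maxHeartbeats 1000000

lemma artanh_lower {a : ℝ} (ha : 0 < a) :
    2 * (1/(2*a+1)) + (2/3) * (1/(2*a+1))^3 ≤ Real.log (1 + a⁻¹) := by
  have h := hasSum_log_one_add_inv ha
  have h2 : ∑ k ∈ Finset.range 2, (2:ℝ) * (1 / (2 * (k:ℝ) + 1)) * (1 / (2 * a + 1)) ^ (2 * k + 1)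
      ≤ Real.log (1 + a⁻¹) := sum_le_hasSum _ (fun k _ => by positivity) h
  refine le_trans (le_of_eq ?_) h2
  rw [Finset.sum_range_succ, Finset.sum_range_one]
  norm_num

lemma artanh_upper {a : ℝ} (ha : 0 < a) :
    Real.log (1 + a⁻¹) ≤ 2 * (1/(2*a+1)) + (2/3) * (1/(2*a+1))^3 / (1 - (1/(2*a+1))^2) := by
  set y : ℝ := 1/(2*a+1) with hy
  have hy0 : 0 < y := by positivity
  have hy1 : y < 1 := by
    rw [hy, div_lt_one (by linarith)]; linarith
  have hsq : y^2 < 1 := by nlinarith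
  have h := hasSum_log_one_add_inv ha
  have htail : HasSum (fun k : ℕ => (2:ℝ) * (1 / (2 * ((k:ℕ)+1:ℕ) + 1)) * y ^ (2 * ((k:ℕ)+1:ℕ) + 1))
      (Real.log (1 + a⁻¹) - 2 * y) := by
    refine (hasSum_nat_add_iff
      (f := fun k : ℕ => (2:ℝ) * (1 / (2 * (k:ℝ) + 1)) * y ^ (2 * k + 1)) 1).2 ?_
    have : Real.log (1 + a⁻¹) - 2 * y +
        ∑ i ∈ Finset.range 1, (2:ℝ) * (1 / (2 * (i:ℝ) + 1)) * y ^ (2 * i + 1)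
        = Real.log (1 + a⁻¹) := by
      rw [Finset.sum_range_one]; norm_num
    rw [this]
    exact h
  have hgeo : HasSum (fun k : ℕ => (2/3) * y^3 * (y^2)^k) ((2/3) * y^3 * (1 - y^2)⁻¹) :=
    (hasSum_geometric_of_lt_one (by positivity) hsq).mul_left _
  have hle : Real.log (1 + a⁻¹) - 2 * y ≤ (2/3) * y^3 * (1 - y^2)⁻¹ := by
    refine hasSum_le (fun k => ?_) htail hgeo
    have hpow : y ^ (2 * ((k:ℕ)+1:ℕ) + 1) = y^3 * (y^2)^k := by
      rw [← pow_mul, ← pow_add]; ring_nf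
    rw [hpow]
    have h13 : (2:ℝ) * (1 / (2 * ((k:ℕ)+1:ℕ) + 1)) ≤ 2/3 := by
      rw [mul_one_div]
      refine div_le_div_of_nonneg_left (by norm_num) (by norm_num) ?_
      push_cast; linarith [Nat.cast_nonneg (α := ℝ) k]
    have : (0:ℝ) ≤ y^3 * (y^2)^k := by positivity
    calc (2:ℝ) * (1 / (2 * ((k:ℕ)+1:ℕ) + 1)) * (y^3 * (y^2)^k)
        ≤ (2/3) * (y^3 * (y^2)^k) := by
          exact mul_le_mul_of_nonneg_right h13 this
      _ = (2/3) * y^3 * (y^2)^k := by ring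
  calc Real.log (1 + a⁻¹) = (Real.log (1 + a⁻¹) - 2*y) + 2*y := by ring
    _ ≤ (2/3) * y^3 * (1 - y^2)⁻¹ + 2*y := by linarith
    _ = 2 * y + (2/3) * y^3 / (1 - y^2) := by rw [div_eq_mul_inv]; ring

-- lower bound on each Stirling log-difference
lemma diff_lower (n : ℕ) : 1 / (3 * (2*(n:ℝ)+3)^2) ≤
    Real.log (stirlingSeq (n+1)) - Real.log (stirlingSeq (n+2)) := by
  have h := log_stirlingSeq_diff_hasSum n
  have h0 := le_hasSum h 0 (fun i _ => by positivity)
  refine le_trans (le_of_eq ?_) h0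
  push_cast
  norm_num
  ring_nf

lemma diff_upper (n : ℕ) : Real.log (stirlingSeq (n+1)) - Real.log (stirlingSeq (n+2)) ≤
    1 / (12 * ((n:ℝ)+1) * ((n:ℝ)+2)) := by
  have h := log_stirlingSeq_diff_hasSum n
  set q : ℝ := (1 / (2 * ((n:ℕ)+1:ℕ) + 1))^2 with hq
  have hq0 : 0 < q := by positivity
  have hq1 : q < 1 := by
    rw [hq]
    have : (1:ℝ) / (2 * ((n:ℕ)+1:ℕ) + 1) < 1 := by
      rw [div_lt_one (by positivity)]
      push_cast; linarith [Nat.cast_nonneg (α := ℝ) n]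
    nlinarith [this, show (0:ℝ) < 1 / (2 * ((n:ℕ)+1:ℕ) + 1) by positivity]
  have hgeo : HasSum (fun k : ℕ => (1/3) * q * q^k) ((1/3) * q * (1 - q)⁻¹) :=
    (hasSum_geometric_of_lt_one hq0.le hq1).mul_left _
  have hle := hasSum_le (fun k => ?_) h hgeo
  · refine le_trans hle (le_of_eq ?_)
    have key : ∀ c : ℝ, 1 < c → 1/3 * (1/c)^2 * (1 - (1/c)^2)⁻¹ = 1/(3*(c^2-1)) := by
      intro c hc
      have hc0 : c ≠ 0 := by positivity
      have hc1 : c^2 - 1 ≠ 0 := by nlinarith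
      have : (1:ℝ) - (1/c)^2 = (c^2-1)/c^2 := by field_simp
      rw [this, inv_div]
      field_simp
    have hc : (1:ℝ) < 2 * ((n:ℕ)+1:ℕ) + 1 := by push_cast; linarith [Nat.cast_nonneg (α := ℝ) n]
    rw [hq, key _ hc]
    push_cast
    congr 1
    ring
  · -- termwise
    have : (1:ℝ) / (2 * ((k:ℕ)+1:ℕ) + 1) ≤ 1/3 := by
      refine div_le_div_of_nonneg_left (by norm_num) (by norm_num) ?_
      push_cast; linarith [Nat.cast_nonneg (α := ℝ) k]
    calc (1:ℝ) / (2 * ((k:ℕ)+1:ℕ) + 1) * q ^ ((k:ℕ)+1:ℕ)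
        ≤ 1/3 * q ^ ((k:ℕ)+1:ℕ) := mul_le_mul_of_nonneg_right this (by positivity)
      _ = 1/3 * q * q^k := by rw [pow_succ]; ring

-- partial telescoping bounds, for N ≥ 1, M ≥ N
lemma partial_upper (N : ℕ) (hN : 1 ≤ N) : ∀ M, N ≤ M →
    Real.log (stirlingSeq N) - Real.log (stirlingSeq M) ≤ 1/(12*(N:ℝ)) - 1/(12*(M:ℝ)) := by
  intro M hM
  induction M with
  | zero => omega
  | succ M ih =>
    rcases Nat.lt_or_ge N (M+1) with h | h
    · have hM' : N ≤ M := by omega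
      have hM1 : 1 ≤ M := by omega
      obtain ⟨m, rfl⟩ : ∃ m, M = m + 1 := ⟨M - 1, by omega⟩
      have step := diff_upper m
      have := ih hM'
      have hcast : ((m:ℝ)+1) = ((m+1:ℕ):ℝ) := by push_cast; ring
      have hcast2 : ((m:ℝ)+2) = ((m+1+1:ℕ):ℝ) := by push_cast; ring
      rw [hcast, hcast2] at step
      have key : 1/(12*((m+1:ℕ):ℝ)) - 1/(12*((m+1+1:ℕ):ℝ)) =
          1/(12 * ((m+1:ℕ):ℝ) * ((m+1+1:ℕ):ℝ)) := by
        push_cast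
        rw [div_sub_div _ _ (by positivity) (by positivity),
          div_eq_div_iff (by positivity) (by positivity)]
        ring
      linarith [step, this, key]
    · have : N = M + 1 := by omega
      subst this
      simp

lemma partial_lower (N : ℕ) (hN : 1 ≤ N) : ∀ M, N ≤ M →
    1/(12*(N:ℝ)+1) - 1/(12*(M:ℝ)+1) ≤
      Real.log (stirlingSeq N) - Real.log (stirlingSeq M) := by
  intro M hM
  induction M with
  | zero => omega
  | succ M ih =>
    rcases Nat.lt_or_ge N (M+1) with h | h
    · have hM' : N ≤ M := by omega
      obtain ⟨m, rfl⟩ : ∃ m, M = m + 1 := ⟨M - 1, by omega⟩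
      have step := diff_lower m
      have ihh := ih hM'
      have key : 1/(12*((m+1:ℕ):ℝ)+1) - 1/(12*((m+1+1:ℕ):ℝ)+1) ≤ 1 / (3 * (2*(m:ℝ)+3)^2) := by
        push_cast
        rw [div_sub_div _ _ (by positivity) (by positivity),
          div_le_div_iff₀ (by positivity) (by positivity)]
        nlinarith [Nat.cast_nonneg (α := ℝ) m]
      linarith [step, ihh, key]
    · have : N = M + 1 := by omega
      subst this
      simp

lemma tendsto_log_stirling :
    Tendsto (fun M : ℕ => Real.log (stirlingSeq M)) atTop (𝓝 (Real.log (Real.sqrt π))) := by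
  have hpos : (0:ℝ) < Real.sqrt π := Real.sqrt_pos.2 Real.pi_pos
  exact ((Real.continuousAt_log hpos.ne').tendsto).comp tendsto_stirlingSeq_sqrt_pi

lemma robbins_upper (N : ℕ) (hN : 1 ≤ N) :
    Real.log (stirlingSeq N) - Real.log (Real.sqrt π) ≤ 1/(12*(N:ℝ)) := by
  have h1 : Tendsto (fun M : ℕ => Real.log (stirlingSeq N) - Real.log (stirlingSeq M)) atTop
      (𝓝 (Real.log (stirlingSeq N) - Real.log (Real.sqrt π))) :=
    tendsto_const_nhds.sub tendsto_log_stirling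
  have h2 : Tendsto (fun M : ℕ => 1/(12*(N:ℝ)) - 1/(12*(M:ℝ))) atTop
      (𝓝 (1/(12*(N:ℝ)) - 0)) := by
    refine tendsto_const_nhds.sub ?_
    have : (fun M : ℕ => (1:ℝ)/(12*(M:ℝ))) = fun M : ℕ => (1/12)/(M:ℝ) := by
      funext M; rw [div_div]
    rw [this]
    exact tendsto_const_div_atTop_nhds_zero_nat _
  have h3 : Real.log (stirlingSeq N) - Real.log (Real.sqrt π) ≤ 1/(12*(N:ℝ)) - 0 := by
    refine le_of_tendsto_of_tendsto h1 h2 ?_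
    filter_upwards [eventually_ge_atTop N] with M hM
    exact partial_upper N hN M hM
  linarith

lemma robbins_lower (N : ℕ) (hN : 1 ≤ N) :
    1/(12*(N:ℝ)+1) ≤ Real.log (stirlingSeq N) - Real.log (Real.sqrt π) := by
  have h1 : Tendsto (fun M : ℕ => Real.log (stirlingSeq N) - Real.log (stirlingSeq M)) atTop
      (𝓝 (Real.log (stirlingSeq N) - Real.log (Real.sqrt π))) :=
    tendsto_const_nhds.sub tendsto_log_stirling
  have h2 : Tendsto (fun M : ℕ => 1/(12*(N:ℝ)+1) - 1/(12*(M:ℝ)+1)) atTop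
      (𝓝 (1/(12*(N:ℝ)+1) - 0)) := by
    refine tendsto_const_nhds.sub ?_
    have hM : Tendsto (fun M : ℕ => 12*(M:ℝ)+1) atTop atTop := by
      refine tendsto_atTop_add_const_right _ 1 ?_
      exact Tendsto.const_mul_atTop (by norm_num) tendsto_natCast_atTop_atTop
    simpa [one_div, Pi.inv_def] using hM.inv_tendsto_atTop
  have h3 : 1/(12*(N:ℝ)+1) - 0 ≤ Real.log (stirlingSeq N) - Real.log (Real.sqrt π) := by
    refine le_of_tendsto_of_tendsto h2 h1 ?_
    filter_upwards [eventually_ge_atTop N] with M hM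
    exact partial_lower N hN M hM
  linarith

lemma log_factorial (N : ℕ) (hN : 1 ≤ N) :
    Real.log (N ! : ℝ) = Real.log (stirlingSeq N) + Real.log (2*(N:ℝ)) / 2
      + N * Real.log N - N := by
  have h := log_stirlingSeq_formula N
  have hN0 : (0:ℝ) < N := by exact_mod_cast hN
  have h2 : Real.log ((N:ℝ) / Real.exp 1) = Real.log N - 1 := by
    rw [Real.log_div hN0.ne' (Real.exp_ne_zero 1), Real.log_exp]
  rw [h2] at h
  have : Real.log (stirlingSeq N) =
      Real.log N ! - 1/2 * Real.log (2*N) - N * (Real.log N - 1) := h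
  push_cast at this ⊢
  linarith

lemma Gamma_half (k : ℕ) :
    Real.Gamma ((k:ℝ) + 1/2) = Real.sqrt π * ((2*k)! : ℝ) / (4^k * (k ! : ℝ)) := by
  induction k with
  | zero =>
    have h0 : ((0:ℕ):ℝ) + 1/2 = 1/2 := by norm_num
    rw [h0, Real.Gamma_one_half_eq]
    simp
  | succ k ih =>
    have hne : ((k:ℝ) + 1/2) ≠ 0 := by positivity
    have step : Real.Gamma (((k+1:ℕ):ℝ) + 1/2) = ((k:ℝ)+1/2) * Real.Gamma ((k:ℝ)+1/2) := by
      have : (((k+1:ℕ):ℝ) + 1/2) = ((k:ℝ) + 1/2) + 1 := by push_cast; ring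
      rw [this, Real.Gamma_add_one hne]
    rw [step, ih]
    have h4 : (4:ℝ)^k ≠ 0 := by positivity
    have hf : ((k)! : ℝ) ≠ 0 := by exact_mod_cast (Nat.factorial_ne_zero k)
    have hf2 : ((k+1)! : ℝ) = (k+1) * (k)! := by exact_mod_cast Nat.factorial_succ k
    have hf3 : ((2*(k+1))! : ℝ) = (2*k+2) * ((2*k+1) * (2*k)!) := by
      have : 2*(k+1) = (2*k+1)+1 := by ring
      rw [this]
      push_cast [Nat.factorial_succ]
      ring
    rw [hf3, hf2]
    push_cast
    field_simp
    ring

/-- The maximal value `g_m(√(m-1))` of the radial density of the `m`-dimensional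
standard Gaussian measure. -/
noncomputable def gaussRadialMax (m : ℕ) : ℝ :=
  (2 : ℝ) ^ ((2 - (m : ℝ)) / 2) / Real.Gamma ((m : ℝ) / 2) *
    ((m : ℝ) - 1) ^ (((m : ℝ) - 1) / 2) * Real.exp (-((m : ℝ) - 1) / 2)

lemma log_even (k : ℕ) (hk : 2 ≤ k) :
    Real.log (gaussRadialMax (2*k)) = -Real.log π/2
      + ((2*(k:ℝ)-1)/2) * Real.log (1 + (2*(k:ℝ)-2)⁻¹) - 1/2
      - (Real.log (stirlingSeq (k-1)) - Real.log (Real.sqrt π)) := by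
  set K : ℝ := (k:ℝ) with hKdef
  have hK : (2:ℝ) ≤ K := by rw [hKdef]; exact_mod_cast hk
  have h1 : ((2*k:ℕ):ℝ) = 2*K := by push_cast; ring
  have hc : ((k-1:ℕ):ℝ) = K - 1 := by
    rw [Nat.cast_sub (by omega : 1 ≤ k)]; norm_num; exact hKdef.symm
  have hΓ : Real.Gamma (2*K/2) = ((k-1)! : ℝ) := by
    have h2 : (2*K/2 : ℝ) = ((k-1:ℕ):ℝ) + 1 := by rw [hc]; ring
    rw [h2, Real.Gamma_nat_eq_factorial]
  have hfpos : (0:ℝ) < ((k-1)! : ℝ) := by exact_mod_cast Nat.factorial_pos (k-1)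
  have hb : (0:ℝ) < 2*K - 1 := by linarith
  have hlog : Real.log (gaussRadialMax (2*k)) =
      (2-2*K)/2 * Real.log 2 - Real.log ((k-1)! : ℝ)
        + (2*K-1)/2 * Real.log (2*K-1) - (2*K-1)/2 := by
    simp only [gaussRadialMax, h1]
    rw [Real.log_mul, Real.log_mul, Real.log_div, Real.log_rpow two_pos,
      Real.log_rpow hb, Real.log_exp, hΓ]
    · ring
    · positivity
    · rw [hΓ]; exact hfpos.ne'
    · rw [hΓ]
      have : (0:ℝ) < (2:ℝ) ^ ((2 - 2*K) / 2) := Real.rpow_pos_of_pos two_pos _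
      positivity
    · exact (Real.rpow_pos_of_pos hb _).ne'
    · have h3 : (0:ℝ) < (2:ℝ) ^ ((2 - 2*K) / 2) := Real.rpow_pos_of_pos two_pos _
      have h4 : (0:ℝ) < (2*K-1) ^ ((2*K-1)/2) := Real.rpow_pos_of_pos hb _
      rw [hΓ]
      positivity
    · exact (Real.exp_pos _).ne'
  have hfac := log_factorial (k-1) (by omega)
  rw [hc] at hfac
  have hL : Real.log (1 + (2*K-2)⁻¹) = Real.log (2*K-1) - (Real.log 2 + Real.log (K-1)) := by
    have hne : (2*K-2) ≠ 0 := by intro h; linarith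
    have h5 : (1:ℝ) + (2*K-2)⁻¹ = (2*K-1)/(2*K-2) := by rw [eq_div_iff hne, add_mul, inv_mul_cancel₀ hne]; ring
    rw [h5, Real.log_div hb.ne' hne]
    have h6 : (2*K-2 : ℝ) = 2*(K-1) := by ring
    rw [h6, Real.log_mul (by norm_num) (fun h => by linarith)]
  have hL2 : Real.log (2*(K-1)) = Real.log 2 + Real.log (K-1) := by
    rw [Real.log_mul (by norm_num) (fun h => by linarith)]
  have hsqrt : Real.log (Real.sqrt π) = Real.log π / 2 := Real.log_sqrt Real.pi_pos.le
  rw [hlog, hfac, hL, hL2, hsqrt]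
  ring

lemma log_odd (k : ℕ) (hk : 1 ≤ k) :
    Real.log (gaussRadialMax (2*k+1)) = -Real.log π/2
      + (Real.log (stirlingSeq k) - Real.log (Real.sqrt π))
      - (Real.log (stirlingSeq (2*k)) - Real.log (Real.sqrt π)) := by
  set K : ℝ := (k:ℝ) with hKdef
  have hK : (1:ℝ) ≤ K := by rw [hKdef]; exact_mod_cast hk
  have h1 : ((2*k+1:ℕ):ℝ) = 2*K+1 := by push_cast; ring
  have hfk : (0:ℝ) < (k ! : ℝ) := by exact_mod_cast Nat.factorial_pos k
  have hf2k : (0:ℝ) < ((2*k)! : ℝ) := by exact_mod_cast Nat.factorial_pos (2*k)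
  have hsp : (0:ℝ) < Real.sqrt π := Real.sqrt_pos.2 Real.pi_pos
  have hΓeq : Real.Gamma ((2*K+1)/2) = Real.sqrt π * ((2*k)! : ℝ) / (4^k * (k ! : ℝ)) := by
    have h2 : ((2*K+1)/2 : ℝ) = (k:ℝ) + 1/2 := by rw [hKdef]; ring
    rw [h2, Gamma_half]
  have hΓpos : (0:ℝ) < Real.Gamma ((2*K+1)/2) := by
    rw [hΓeq]; positivity
  have hb : (0:ℝ) < 2*K := by linarith
  have hlog : Real.log (gaussRadialMax (2*k+1)) =
      (2-(2*K+1))/2 * Real.log 2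
        - (Real.log (Real.sqrt π) + Real.log ((2*k)! : ℝ) - (k * Real.log 4 + Real.log (k ! : ℝ)))
        + (2*K)/2 * Real.log (2*K) - (2*K)/2 := by
    simp only [gaussRadialMax, h1]
    have e1 : (2*K+1-1 : ℝ) = 2*K := by ring
    rw [e1]
    rw [Real.log_mul, Real.log_mul, Real.log_div, Real.log_rpow two_pos,
      Real.log_rpow hb, Real.log_exp, hΓeq]
    · rw [Real.log_div (by positivity) (by positivity), Real.log_mul hsp.ne' hf2k.ne',
        Real.log_mul (by positivity : ((4:ℝ)^k) ≠ 0) hfk.ne', Real.log_pow]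
      push_cast
      ring
    · positivity
    · exact hΓpos.ne'
    · have := Real.rpow_pos_of_pos two_pos ((2 - (2*K+1))/2)
      positivity
    · exact (Real.rpow_pos_of_pos hb _).ne'
    · have h3 := Real.rpow_pos_of_pos two_pos ((2 - (2*K+1))/2)
      have h4 := Real.rpow_pos_of_pos hb ((2*K)/2)
      positivity
    · exact (Real.exp_pos _).ne'
  have hfac1 := log_factorial k hk
  have hfac2 := log_factorial (2*k) (by omega)
  have hcast2 : ((2*k:ℕ):ℝ) = 2*K := by push_cast; ring
  rw [hcast2] at hfac2
  have hlog2K : Real.log (2*K) = Real.log 2 + Real.log K := by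
    rw [Real.log_mul (by norm_num) (by intro h; rw [hKdef] at h; simp at h; omega)]
  have hlog4K : Real.log (2*(2*K)) = Real.log 2 + Real.log 2 + Real.log K := by
    have : (2*(2*K) : ℝ) = 2*(2*K) := rfl
    rw [Real.log_mul (by norm_num) (by positivity), hlog2K]
    ring
  have hlog4 : Real.log (4:ℝ) = 2 * Real.log 2 := by
    have : (4:ℝ) = 2^2 := by norm_num
    rw [this, Real.log_pow]; push_cast; ring
  have hsqrt : Real.log (Real.sqrt π) = Real.log π / 2 := Real.log_sqrt Real.pi_pos.le
  rw [hlog, hfac1, hfac2, hlog4K, hlog2K, hlog4, hsqrt, ← hKdef]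
  ring

lemma even_key (x : ℝ) (hx : 2 ≤ x) :
    1/2 + 1/(12*(x-1)) + 1/(12*x) ≤
      ((2*x-1)/2) * (2*(1/(2*(2*x-2)+1)) + (2/3)*(1/(2*(2*x-2)+1))^3) + 1/(24*x+1) := by
  have h1 : (0:ℝ) < 4*x-3 := by linarith
  have h2 : (0:ℝ) < 12*(x-1) := by linarith
  have h3 : (0:ℝ) < 12*x := by linarith
  have h4 : (0:ℝ) < 24*x+1 := by linarith
  have h5 : (2*(2*x-2)+1 : ℝ) = 4*x-3 := by ring
  rw [h5]
  have key : ((2*x-1)/2) * (2*(1/(4*x-3)) + (2/3)*(1/(4*x-3))^3) + 1/(24*x+1)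
      - (1/2 + 1/(12*(x-1)) + 1/(12*x)) =
      (25344*x^4 - 74304*x^3 + 64368*x^2 - 15264*x - 1944) /
        (6*(4*x-3)^3*(12*(x-1))*(12*x)*(24*x+1)) := by
    have hx1 : x - 1 ≠ 0 := by linarith
    have hx0 : x ≠ 0 := by linarith
    have h1'' : x*4-3 ≠ 0 := by intro h; linarith
    field_simp [h1.ne', h4.ne', hx1, hx0, h1'']
    ring
  have hnum : (0:ℝ) ≤ 25344*x^4 - 74304*x^3 + 64368*x^2 - 15264*x - 1944 := by
    nlinarith [sq_nonneg (x-2), pow_pos (show (0:ℝ) < x-2+1 by linarith) 2,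
      mul_nonneg (mul_nonneg (sub_nonneg.2 hx) (sub_nonneg.2 hx)) (sub_nonneg.2 hx),
      mul_nonneg (mul_nonneg (mul_nonneg (sub_nonneg.2 hx) (sub_nonneg.2 hx)) (sub_nonneg.2 hx)) (sub_nonneg.2 hx)]
  have hden : (0:ℝ) < 6*(4*x-3)^3*(12*(x-1))*(12*x)*(24*x+1) := by positivity
  nlinarith [div_nonneg hnum hden.le, key]

lemma odd_key (x : ℝ) (hx : 1 ≤ x) :
    ((2*x+1)/2) * (2*(1/(2*(2*x)+1)) + (2/3)*(1/(2*(2*x)+1))^3/(1-(1/(2*(2*x)+1))^2)) ≤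
      1/2 + 2*(1/(12*x+1)) - 1/(24*x) := by
  have h1 : (0:ℝ) < 4*x+1 := by linarith
  have h5 : (2*(2*x)+1 : ℝ) = 4*x+1 := by ring
  rw [h5]
  have h6 : (1:ℝ) - (1/(4*x+1))^2 = ((4*x+1)^2-1)/(4*x+1)^2 := by field_simp
  have h7 : ((4*x+1)^2-1 : ℝ) = 8*x*(2*x+1) := by ring
  have h2 : (0:ℝ) < 12*x+1 := by linarith
  have h3 : (0:ℝ) < 24*x := by linarith
  have h8 : (0:ℝ) < 8*x*(2*x+1) := by nlinarith
  have key : 1/2 + 2*(1/(12*x+1)) - 1/(24*x)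
      - ((2*x+1)/2) * (2*(1/(4*x+1)) + (2/3)*(1/(4*x+1))^3/(((4*x+1)^2-1)/(4*x+1)^2)) =
      (8*x - 2) / (24*x*(4*x+1)*(12*x+1)) := by
    rw [h7]
    field_simp
    ring
  rw [h6]
  have hden : (0:ℝ) < 24*x*(4*x+1)*(12*x+1) := by positivity
  have hnum : (0:ℝ) ≤ 8*x-2 := by linarith
  nlinarith [div_nonneg hnum hden.le, key]

lemma gauss_pos (m : ℕ) (hm : 2 ≤ m) : 0 < gaussRadialMax m := by
  have h1 : (0:ℝ) < Real.Gamma ((m:ℝ)/2) := by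
    apply Real.Gamma_pos_of_pos
    have : (2:ℝ) ≤ (m:ℝ) := by exact_mod_cast hm
    linarith
  have h2 : (0:ℝ) < (m:ℝ) - 1 := by
    have : (2:ℝ) ≤ (m:ℝ) := by exact_mod_cast hm
    linarith
  have h3 := Real.rpow_pos_of_pos two_pos ((2 - (m:ℝ))/2)
  have h4 := Real.rpow_pos_of_pos h2 (((m:ℝ)-1)/2)
  have h5 := Real.exp_pos (-((m:ℝ)-1)/2)
  unfold gaussRadialMax
  positivity

lemma antitone_even (k : ℕ) (hk : 2 ≤ k) :
    gaussRadialMax (2*k+1) ≤ gaussRadialMax (2*k) := by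
  rw [← Real.log_le_log_iff (gauss_pos _ (by omega)) (gauss_pos _ (by omega))]
  rw [log_even k hk, log_odd k (by omega)]
  set K : ℝ := (k:ℝ) with hKdef
  have hK : (2:ℝ) ≤ K := by rw [hKdef]; exact_mod_cast hk
  have hc1 : ((k-1:ℕ):ℝ) = K - 1 := by
    rw [hKdef, Nat.cast_sub (by omega : 1 ≤ k)]; norm_num
  have hc2 : ((2*k:ℕ):ℝ) = 2*K := by rw [hKdef]; push_cast; ring
  have hr1 := robbins_upper (k-1) (by omega)
  have hr2 := robbins_upper k (by omega)
  have hr3 := robbins_lower (2*k) (by omega)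
  rw [hc1] at hr1
  rw [hc2] at hr3
  have he24 : (12*(2*K)+1 : ℝ) = 24*K+1 := by ring
  rw [he24] at hr3
  have hL := artanh_lower (show (0:ℝ) < 2*K-2 by linarith)
  have hkey := even_key K hK
  have hmul : ((2*K-1)/2) * (2 * (1/(2*(2*K-2)+1)) + (2/3) * (1/(2*(2*K-2)+1))^3) ≤
      ((2*K-1)/2) * Real.log (1 + (2*K-2)⁻¹) :=
    mul_le_mul_of_nonneg_left hL (by linarith)
  have h12 : (1:ℝ)/(12*K+1) ≤ 1/(12*K) := by
    apply div_le_div_of_nonneg_left (by norm_num) (by linarith) (by linarith)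
  rw [← hKdef] at hr2
  linarith [hr2, hmul, hkey, hr1, hr3, h12]

lemma antitone_odd (k : ℕ) (hk : 1 ≤ k) :
    gaussRadialMax (2*k+2) ≤ gaussRadialMax (2*k+1) := by
  rw [← Real.log_le_log_iff (gauss_pos _ (by omega)) (gauss_pos _ (by omega))]
  have h1 : 2*k+2 = 2*(k+1) := by ring
  rw [h1, log_even (k+1) (by omega), log_odd k hk]
  set K : ℝ := (k:ℝ) with hKdef
  have hK : (1:ℝ) ≤ K := by rw [hKdef]; exact_mod_cast hk
  have hc1 : ((k+1:ℕ):ℝ) = K + 1 := by rw [hKdef]; push_cast; ring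
  have hc2 : ((2*k:ℕ):ℝ) = 2*K := by rw [hKdef]; push_cast; ring
  have hc3 : (k+1) - 1 = k := by omega
  rw [hc3, hc1]
  have hr2 := robbins_lower k hk
  rw [← hKdef] at hr2
  have hr3 := robbins_upper (2*k) (by omega)
  rw [hc2] at hr3
  have he24 : (12*(2*K) : ℝ) = 24*K := by ring
  rw [he24] at hr3
  have he1 : (2*(K+1)-2 : ℝ) = 2*K := by ring
  have he2 : (2*(K+1)-1 : ℝ) = 2*K+1 := by ring
  rw [he1, he2]
  have hL := artanh_upper (show (0:ℝ) < 2*K by linarith)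
  have hkey := odd_key K hK
  have hmul : ((2*K+1)/2) * Real.log (1 + (2*K)⁻¹) ≤
      ((2*K+1)/2) * (2*(1/(2*(2*K)+1)) + (2/3)*(1/(2*(2*K)+1))^3/(1-(1/(2*(2*K)+1))^2)) :=
    mul_le_mul_of_nonneg_left hL (by linarith)
  linarith [hr2, hmul, hkey, hr3]

lemma base_case : gaussRadialMax 3 ≤ gaussRadialMax 2 := by
  have hs2 : (0:ℝ) < Real.sqrt 2 := Real.sqrt_pos.2 (by norm_num)
  have hsp : (0:ℝ) < Real.sqrt π := Real.sqrt_pos.2 Real.pi_pos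
  have hg2 : gaussRadialMax 2 = Real.exp (-(1:ℝ)/2) := by
    unfold gaussRadialMax
    norm_num [Real.Gamma_one]
  have hg3 : gaussRadialMax 3 = 2 * Real.sqrt 2 / Real.sqrt π * Real.exp (-1) := by
    unfold gaussRadialMax
    have h1 : (((3:ℕ)):ℝ) = 3 := by norm_num
    rw [h1]
    have h2 : ((3:ℝ)-1)/2 = 1 := by norm_num
    have h3 : (2 - (3:ℝ))/2 = -(1/2) := by norm_num
    have h4 : (3:ℝ)/2 = (1:ℕ) + 1/2 := by norm_num
    rw [h2, h3, h4, Gamma_half 1]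
    have h5 : ((3:ℝ)-1) = 2 := by norm_num
    rw [h5, Real.rpow_one]
    have h6 : (2:ℝ) ^ (-(1/2):ℝ) = (Real.sqrt 2)⁻¹ := by
      rw [Real.rpow_neg (by norm_num), ← Real.sqrt_eq_rpow]
    rw [h6]
    have h7 : (-(3:ℝ)+1)/2 = -1 := by norm_num
    have hsq : Real.sqrt 2 * Real.sqrt 2 = 2 := Real.mul_self_sqrt (by norm_num)
    norm_num
    field_simp
    nlinarith [hsq, hs2, hsp, sq_nonneg (Real.sqrt 2 - Real.sqrt π)]
  rw [hg2, hg3]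
  rw [div_mul_eq_mul_div, div_le_iff₀ hsp]
  have key : (8:ℝ) ≤ π * Real.exp 1 := by
    nlinarith [Real.pi_gt_d6, Real.exp_one_gt_d9]
  refine le_of_pow_le_pow_left₀ two_ne_zero (by positivity) ?_
  have e1 : Real.exp (-(1:ℝ)) ^ 2 = Real.exp (-2) := by
    rw [← Real.exp_nat_mul]; norm_num
  have e2 : Real.exp (-(1:ℝ)/2) ^ 2 = Real.exp (-1) := by
    rw [← Real.exp_nat_mul]; norm_num
  have hsq : Real.sqrt 2 ^ 2 = 2 := Real.sq_sqrt (by norm_num)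
  have hsqp : Real.sqrt π ^ 2 = π := Real.sq_sqrt Real.pi_pos.le
  have expand : (2 * Real.sqrt 2 * Real.exp (-1)) ^ 2 = 8 * Real.exp (-2) := by
    rw [mul_pow, mul_pow, hsq, e1]; norm_num
  have expand2 : (Real.exp (-(1:ℝ)/2) * Real.sqrt π) ^ 2 = Real.exp (-1) * π := by
    rw [mul_pow, hsqp, e2]
  rw [expand, expand2]
  have hee : Real.exp (-1) * Real.exp 1 = 1 := by
    rw [← Real.exp_add]; norm_num
  have hee2 : Real.exp (-2) * (Real.exp 1 * Real.exp 1) = 1 := by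
    rw [← Real.exp_add, ← Real.exp_add]; norm_num
  nlinarith [key, Real.exp_pos (-1), Real.exp_pos (-2), Real.exp_pos 1, hee, hee2,
    Real.exp_one_gt_d9, Real.pi_gt_d6]

lemma sandwich (m : ℕ) (hm : 4 ≤ m) :
    |Real.log (gaussRadialMax m) + Real.log π / 2| ≤ 1/((m:ℝ)-3) := by
  have hm3 : (0:ℝ) < (m:ℝ) - 3 := by
    have : (4:ℝ) ≤ (m:ℝ) := by exact_mod_cast hm
    linarith
  obtain ⟨k, hk | hk⟩ := Nat.even_or_odd' m
  · -- m = 2k, k ≥ 2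
    subst hk
    have hk2 : 2 ≤ k := by omega
    set K : ℝ := (k:ℝ) with hKdef
    have hK : (2:ℝ) ≤ K := by rw [hKdef]; exact_mod_cast hk2
    have hc1 : ((k-1:ℕ):ℝ) = K - 1 := by
      rw [hKdef, Nat.cast_sub (by omega : 1 ≤ k)]; norm_num
    have hr1u := robbins_upper (k-1) (by omega)
    have hr1l := robbins_lower (k-1) (by omega)
    rw [hc1] at hr1u hr1l
    have hcast : ((2*k:ℕ):ℝ) = 2*K := by rw [hKdef]; push_cast; ring
    rw [log_even k hk2, ← hKdef, hcast, abs_le]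
    have hb : (0:ℝ) < 2*K-2 := by linarith
    have hx : (0:ℝ) < 1 + (2*K-2)⁻¹ := by positivity
    have hup : Real.log (1 + (2*K-2)⁻¹) ≤ (2*K-2)⁻¹ := by
      have := Real.log_le_sub_one_of_pos hx
      linarith
    have hlo := artanh_lower hb
    have hcoef : (0:ℝ) ≤ (2*K-1)/2 := by linarith
    have hmu := mul_le_mul_of_nonneg_left hup hcoef
    have hml := mul_le_mul_of_nonneg_left hlo hcoef
    have hq1 : (2*K-1)/2 * (2*K-2)⁻¹ - 1/2 = 1/(4*(K-1)) := by
      have h1 : (2*K-2) ≠ 0 := hb.ne'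
      have h2 : (K-1) ≠ 0 := by intro h; rw [sub_eq_zero] at h; rw [h] at hK; norm_num at hK
      field_simp
      ring
    have hq2 : (1:ℝ)/2 ≤ (2*K-1)/2 * (2 * (1/(2*(2*K-2)+1)) + 2/3 * (1/(2*(2*K-2)+1))^3) := by
      have h1 : (0:ℝ) < 2*(2*K-2)+1 := by linarith
      have ht : (0:ℝ) < 1/(2*(2*K-2)+1) := by positivity
      have hid : (1/(2*(2*K-2)+1))*(2*(2*K-2)+1) = 1 := one_div_mul_cancel h1.ne'
      nlinarith [pow_pos ht 3, ht, hid, hK]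
    have hrpos : (0:ℝ) < 1/(12*(K-1)+1) := by
      have : (0:ℝ) < 12*(K-1)+1 := by linarith
      positivity
    have henv1 : 1/(4*(K-1)) ≤ 1/(2*K-3) := by
      rw [div_le_div_iff₀ (by linarith) (by linarith)]
      linarith
    have henv2 : 1/(12*(K-1)) ≤ 1/(2*K-3) := by
      rw [div_le_div_iff₀ (by linarith) (by linarith)]
      linarith
    constructor
    · linarith [hml, hq2, hr1u, henv2]
    · linarith [hmu, hq1, hr1l, hrpos, henv1]
  · -- m = 2k+1, k ≥ 2
    subst hk
    have hk2 : 2 ≤ k := by omega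
    set K : ℝ := (k:ℝ) with hKdef
    have hK : (2:ℝ) ≤ K := by rw [hKdef]; exact_mod_cast hk2
    have hru := robbins_upper k (by omega)
    have hrl := robbins_lower k (by omega)
    have hru2 := robbins_upper (2*k) (by omega)
    have hrl2 := robbins_lower (2*k) (by omega)
    have hc2 : ((2*k:ℕ):ℝ) = 2*K := by rw [hKdef]; push_cast; ring
    rw [hc2] at hru2 hrl2
    rw [← hKdef] at hru hrl
    have hcast : ((2*k+1:ℕ):ℝ) = 2*K+1 := by rw [hKdef]; push_cast; ring
    rw [log_odd k (by omega), hcast, abs_le]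
    have h1 : (0:ℝ) < 1/(12*K+1) := by
      have : (0:ℝ) < 12*K+1 := by linarith
      positivity
    have h2 : (0:ℝ) < 1/(12*(2*K)+1) := by
      have : (0:ℝ) < 12*(2*K)+1 := by linarith
      positivity
    have h3 : 1/(12*K) ≤ 1/(2*K+1-3) := by
      rw [div_le_div_iff₀ (by linarith) (by linarith)]
      linarith
    have h4 : 1/(12*(2*K)) ≤ 1/(2*K+1-3) := by
      rw [div_le_div_iff₀ (by linarith) (by linarith)]
      linarith
    constructor
    · linarith [hru2, hrl, h2, h4]
    · linarith [hru, hrl2, h1, h3]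

lemma tendsto_main : Tendsto gaussRadialMax atTop (𝓝 (1/Real.sqrt π)) := by
  have hsp : (0:ℝ) < Real.sqrt π := Real.sqrt_pos.2 Real.pi_pos
  have hu : Tendsto (fun m : ℕ => 1/((m:ℝ)-3)) atTop (𝓝 0) := by
    have h1 : Tendsto (fun m : ℕ => (m:ℝ) - 3) atTop atTop :=
      tendsto_atTop_add_const_right atTop (-3 : ℝ) tendsto_natCast_atTop_atTop
    simpa [one_div, Pi.inv_def] using h1.inv_tendsto_atTop
  have habs : Tendsto (fun m : ℕ => Real.log (gaussRadialMax m)) atTop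
      (𝓝 (-Real.log π/2)) := by
    rw [tendsto_iff_dist_tendsto_zero]
    refine squeeze_zero' ?_ ?_ hu
    · filter_upwards with m; exact dist_nonneg
    · filter_upwards [eventually_ge_atTop 4] with m hm
      rw [Real.dist_eq]
      have := sandwich m hm
      have e : Real.log (gaussRadialMax m) - (-Real.log π/2)
          = Real.log (gaussRadialMax m) + Real.log π/2 := by ring
      rw [e]
      exact this
  have hexp : Tendsto (fun m : ℕ => Real.exp (Real.log (gaussRadialMax m))) atTop
      (𝓝 (Real.exp (-Real.log π/2))) := (Real.continuous_exp.tendsto _).comp habs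
  have heq : Real.exp (-Real.log π/2) = 1/Real.sqrt π := by
    rw [show -Real.log π/2 = -(Real.log π/2) by ring, Real.exp_neg,
      ← Real.log_sqrt Real.pi_pos.le, Real.exp_log hsp, one_div]
  rw [← heq]
  refine hexp.congr' ?_
  filter_upwards [eventually_ge_atTop 2] with m hm
  exact Real.exp_log (gauss_pos m hm)

theorem gaussRadialMax_antitone_tendsto :
    (∀ m : ℕ, 2 ≤ m → gaussRadialMax (m + 1) ≤ gaussRadialMax m) ∧
    Tendsto gaussRadialMax atTop (nhds (1 / Real.sqrt Real.pi)) := by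
  constructor
  · intro m hm
    obtain ⟨k, hk | hk⟩ := Nat.even_or_odd' m
    · subst hk
      rcases Nat.lt_or_ge k 2 with h | h
      · have hk1 : k = 1 := by omega
        subst hk1
        exact base_case
      · exact antitone_even k h
    · subst hk
      have hk1 : 1 ≤ k := by omega
      have e : 2*k+1+1 = 2*k+2 := by omega
      rw [e]
      exact antitone_odd k hk1
  · exact tendsto_main
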